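/- Let 1 < p < ∞ and let G = d_*((1/n)_{n∈ℕ}). Then every element of G belongs to ℓ_p, and the formal identity map from G into ℓ_p is a bounded linear operator. -/

import Mathlib

open Filter Topology

/-- `rearrSum x n = ∑_{k=1}^n x̃_k`, the sum of the `n` largest values of `(|x_k|)`,
i.e. the `n`-th partial sum of the nonincreasing rearrangement of `(|x_k|)`; it is the
supremum of `∑_{k ∈ A} |x_k|` over finite sets `A ⊆ ℕ` of cardinality `n`. -/
noncomputable def rearrSum (x : ℕ → ℝ) (n : ℕ) : ℝ :=
  sSup ((fun A : Finset ℕ => ∑ k ∈ A, |x k|) '' {A : Finset ℕ | A.card = n})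

/-- A sequence of positive reals is admissible if it is nonincreasing, starts at `1`,
tends to `0` and is not summable. -/
def Admissible (w : ℕ → ℝ) : Prop :=
  (∀ n, 0 < w n) ∧ (∀ n, w (n + 1) ≤ w n) ∧ w 0 = 1 ∧
    Tendsto w atTop (𝓝 0) ∧ ¬ Summable w

/-- The underlying set of sequences of `d_*(w)`: sequences `x ∈ c₀` with
`(∑_{k=1}^n x̃_k) / (∑_{k=1}^n w_k) → 0`. -/
def dStarSet (w : ℕ → ℝ) : Set (ℕ → ℝ) :=
  {x | Tendsto x atTop (𝓝 0) ∧
    Tendsto (fun n => rearrSum x n / ∑ k ∈ Finset.range n, w k) atTop (𝓝 0)}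

/-- The norm of `d_*(w)`: `‖x‖ = sup_n (∑_{k=1}^n x̃_k) / (∑_{k=1}^n w_k)`. -/
noncomputable def dStarNorm (w : ℕ → ℝ) (x : ℕ → ℝ) : ℝ :=
  ⨆ n : ℕ, rearrSum x n / ∑ k ∈ Finset.range n, w k

/-- A normed space `D` is a representation of `d_*(w)` if there is a linear bijection `j`
from `D` onto the set of sequences of `d_*(w)` carrying the norm of `D` to the norm of
`d_*(w)`; i.e. `D` "is" the space `d_*(w)` endowed with its canonical norm. -/
def IsDStarRep (w : ℕ → ℝ) (D : Type*) [NormedAddCommGroup D] [NormedSpace ℝ D]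
    (j : D →ₗ[ℝ] (ℕ → ℝ)) : Prop :=
  Function.Injective j ∧ Set.range j = dStarSet w ∧ ∀ x : D, ‖x‖ = dStarNorm w (j x)


/-! ### Auxiliary lemmas -/

noncomputable def Hsum (n : ℕ) : ℝ := ∑ k ∈ Finset.range n, 1 / ((k : ℝ) + 1)

lemma Hsum_pos {n : ℕ} (hn : 0 < n) : 0 < Hsum n :=
  Finset.sum_pos (fun i _ => by positivity) (by simpa using hn.ne')

lemma Hsum_nonneg (n : ℕ) : 0 ≤ Hsum n :=
  Finset.sum_nonneg fun i _ => by positivity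

lemma Hsum_one : Hsum 1 = 1 := by simp [Hsum]

lemma Hsum_le_log (n : ℕ) : Hsum (n + 1) ≤ 1 + Real.log ((n : ℝ) + 1) := by
  have h := harmonic_le_one_add_log (n + 1)
  have he : ((harmonic (n + 1) : ℚ) : ℝ) = Hsum (n + 1) := by
    rw [harmonic, Hsum]
    push_cast
    exact Finset.sum_congr rfl fun i _ => by rw [one_div]
  rw [he] at h
  convert h using 3
  push_cast; ring

lemma summable_Hsum_rpow {p : ℝ} (hp : 1 < p) :
    Summable (fun j : ℕ => (Hsum (j + 1) / ((j : ℝ) + 1)) ^ p) := by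
  have hp0 : (0 : ℝ) < p := by linarith
  set q : ℝ := (p + 1) / 2 with hq
  have hq1 : 1 < q := by rw [hq]; linarith
  have hqp : q < p := by rw [hq]; linarith
  set ε : ℝ := 1 - q / p with hε
  have hε0 : 0 < ε := by
    rw [hε]; have : q / p < 1 := (div_lt_one hp0).2 hqp; linarith
  have hreal : Tendsto (fun t : ℝ => (1 + Real.log t) / t ^ ε) atTop (𝓝 0) := by
    have h1 : (fun _ : ℝ => (1 : ℝ)) =o[atTop] fun t : ℝ => t ^ ε :=
      Asymptotics.isLittleO_const_left.2 (Or.inr (by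
        simpa [Function.comp_def, Real.norm_eq_abs] using
          tendsto_abs_atTop_atTop.comp (tendsto_rpow_atTop hε0)))
    have h2 : Real.log =o[atTop] fun t : ℝ => t ^ ε := isLittleO_log_rpow_atTop hε0
    exact (h1.add h2).tendsto_div_nhds_zero
  have hcast : Tendsto (fun j : ℕ => (j : ℝ) + 1) atTop atTop :=
    tendsto_atTop_add_const_right atTop 1 tendsto_natCast_atTop_atTop
  have hu : Tendsto (fun j : ℕ => (1 + Real.log ((j : ℝ) + 1)) / ((j : ℝ) + 1) ^ ε)
      atTop (𝓝 0) := hreal.comp hcast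
  have hev : ∀ᶠ j : ℕ in atTop,
      (Hsum (j + 1) / ((j : ℝ) + 1)) ^ p ≤ ((j : ℝ) + 1) ^ (-q) := by
    filter_upwards [hu.eventually (eventually_le_nhds zero_lt_one)] with j hj
    have hj1 : (0 : ℝ) < (j : ℝ) + 1 := by positivity
    have hpow : (0 : ℝ) < ((j : ℝ) + 1) ^ ε := Real.rpow_pos_of_pos hj1 ε
    have h1 : 1 + Real.log ((j : ℝ) + 1) ≤ ((j : ℝ) + 1) ^ ε := (div_le_one hpow).1 hj
    have h2 : Hsum (j + 1) / ((j : ℝ) + 1) ≤ ((j : ℝ) + 1) ^ (ε - 1) := by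
      rw [Real.rpow_sub hj1, Real.rpow_one]
      exact div_le_div_of_nonneg_right ((Hsum_le_log j).trans h1) hj1.le
    calc (Hsum (j + 1) / ((j : ℝ) + 1)) ^ p
        ≤ (((j : ℝ) + 1) ^ (ε - 1)) ^ p :=
          Real.rpow_le_rpow (div_nonneg (Hsum_nonneg _) (by positivity)) h2 hp0.le
      _ = ((j : ℝ) + 1) ^ ((ε - 1) * p) := by
          rw [← Real.rpow_mul hj1.le]
      _ = ((j : ℝ) + 1) ^ (-q) := by
          congr 1
          rw [hε]
          field_simp
          ring
  have hg : Summable (fun j : ℕ => ((j : ℝ) + 1) ^ (-q)) := by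
    have h := Real.summable_nat_rpow.2 (show -q < -1 by linarith)
    have := (summable_nat_add_iff 1).2 h
    exact this.congr fun j => by push_cast; ring_nf
  refine summable_of_isBigO_nat hg (Asymptotics.IsBigO.of_bound 1 ?_)
  filter_upwards [hev] with j hj
  rw [one_mul, Real.norm_eq_abs, Real.norm_eq_abs,
    abs_of_nonneg (Real.rpow_nonneg (div_nonneg (Hsum_nonneg _) (by positivity)) _),
    abs_of_nonneg (Real.rpow_nonneg (by positivity) _)]
  exact hj

lemma bddAbove_rearr {x : ℕ → ℝ} {B : ℝ} (hB : ∀ k, |x k| ≤ B) (n : ℕ) :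
    BddAbove ((fun A : Finset ℕ => ∑ k ∈ A, |x k|) '' {A : Finset ℕ | A.card = n}) := by
  refine ⟨n * B, ?_⟩
  rintro _ ⟨S, hS, rfl⟩
  calc ∑ k ∈ S, |x k| ≤ ∑ _k ∈ S, B := Finset.sum_le_sum fun k _ => hB k
    _ = S.card * B := by rw [Finset.sum_const, nsmul_eq_mul]
    _ = n * B := by rw [hS]

lemma sum_le_rearrSum {x : ℕ → ℝ} {B : ℝ} (hB : ∀ k, |x k| ≤ B) (A : Finset ℕ) :
    ∑ k ∈ A, |x k| ≤ rearrSum x A.card :=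
  le_csSup (bddAbove_rearr hB _) ⟨A, rfl, rfl⟩

lemma rearrSum_zero (x : ℕ → ℝ) : rearrSum x 0 = 0 := by
  have h : {A : Finset ℕ | A.card = 0} = {(∅ : Finset ℕ)} := by
    ext A; simp [Finset.card_eq_zero]
  simp [rearrSum, h]

lemma abs_bound_of_tendsto {x : ℕ → ℝ} (hx : Tendsto x atTop (𝓝 0)) :
    ∃ B : ℝ, ∀ k, |x k| ≤ B := by
  have h : Tendsto (fun k => |x k|) atTop (𝓝 0) := by simpa using hx.abs
  obtain ⟨B, hB⟩ := h.bddAbove_range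
  exact ⟨B, fun k => hB (Set.mem_range_self k)⟩

lemma master_bound {p : ℝ} (hp : 1 < p) {x : ℕ → ℝ}
    (hx1 : Tendsto x atTop (𝓝 0))
    (hx2 : Tendsto (fun n => rearrSum x n / Hsum n) atTop (𝓝 0)) :
    Summable (fun k => |x k| ^ p) ∧
      (∑' k : ℕ, |x k| ^ p) ^ (1 / p) ≤
        (∑' j : ℕ, (Hsum (j + 1) / ((j : ℝ) + 1)) ^ p) ^ (1 / p) *
          (⨆ n : ℕ, rearrSum x n / Hsum n) := by
  have hp0 : (0 : ℝ) < p := by linarith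
  obtain ⟨B, hB⟩ := abs_bound_of_tendsto hx1
  set M : ℝ := ⨆ n : ℕ, rearrSum x n / Hsum n with hM
  have hbdd : BddAbove (Set.range fun n => rearrSum x n / Hsum n) := hx2.bddAbove_range
  have hfM : ∀ n, rearrSum x n / Hsum n ≤ M := fun n => le_ciSup hbdd n
  have hM0 : 0 ≤ M := by
    have h0 := hfM 0
    rw [rearrSum_zero] at h0
    simpa using h0
  have hrearr : ∀ n, rearrSum x n ≤ M * Hsum n := by
    intro n
    cases n with
    | zero => simp [rearrSum_zero, Hsum]
    | succ n => exact (div_le_iff₀ (Hsum_pos n.succ_pos)).1 (hfM (n + 1))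
  have hcnn : ∀ j : ℕ, 0 ≤ Hsum (j + 1) / ((j : ℝ) + 1) :=
    fun j => div_nonneg (Hsum_nonneg _) (by positivity)
  have key : ∀ n : ℕ, ∀ A : Finset ℕ, A.card = n →
      ∑ k ∈ A, |x k| ^ p ≤
        ∑ j ∈ Finset.range n, (M * (Hsum (j + 1) / ((j : ℝ) + 1))) ^ p := by
    intro n
    induction n with
    | zero => intro A hA; simp [Finset.card_eq_zero.1 hA]
    | succ n ih =>
      intro A hA
      have hAne : A.Nonempty := Finset.card_pos.1 (by omega)
      obtain ⟨k₀, hk₀A, hk₀⟩ := A.exists_min_image (fun k => |x k|) hAne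
      have hcard : ((n : ℝ) + 1) * |x k₀| ≤ ∑ k ∈ A, |x k| := by
        have h := Finset.card_nsmul_le_sum A (fun k => |x k|) (|x k₀|) (fun k hk => hk₀ k hk)
        rw [hA] at h
        simpa [nsmul_eq_mul, Nat.cast_add_one] using h
      have hsumle : ∑ k ∈ A, |x k| ≤ M * Hsum (n + 1) := by
        have h := sum_le_rearrSum hB A
        rw [hA] at h
        exact h.trans (hrearr (n + 1))
      have hbound : |x k₀| ≤ M * (Hsum (n + 1) / ((n : ℝ) + 1)) := by
        rw [mul_div_assoc', le_div_iff₀ (by positivity : (0:ℝ) < (n : ℝ) + 1), mul_comm]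
        exact hcard.trans hsumle
      calc ∑ k ∈ A, |x k| ^ p
          = |x k₀| ^ p + ∑ k ∈ A.erase k₀, |x k| ^ p :=
            (Finset.add_sum_erase _ _ hk₀A).symm
        _ ≤ (M * (Hsum (n + 1) / ((n : ℝ) + 1))) ^ p +
              ∑ j ∈ Finset.range n, (M * (Hsum (j + 1) / ((j : ℝ) + 1))) ^ p :=
            add_le_add (Real.rpow_le_rpow (abs_nonneg _) hbound hp0.le)
              (ih (A.erase k₀) (by rw [Finset.card_erase_of_mem hk₀A, hA]; omega))
        _ = ∑ j ∈ Finset.range (n + 1), (M * (Hsum (j + 1) / ((j : ℝ) + 1))) ^ p := by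
            rw [Finset.sum_range_succ]; exact add_comm _ _
  have hc_sum := summable_Hsum_rpow hp
  have hb_eq : ∀ j : ℕ, (M * (Hsum (j + 1) / ((j : ℝ) + 1))) ^ p =
      M ^ p * (Hsum (j + 1) / ((j : ℝ) + 1)) ^ p :=
    fun j => Real.mul_rpow hM0 (hcnn j)
  have hb_sum : Summable (fun j : ℕ => (M * (Hsum (j + 1) / ((j : ℝ) + 1))) ^ p) :=
    (hc_sum.mul_left (M ^ p)).congr fun j => (hb_eq j).symm
  set S : ℝ := ∑' j : ℕ, (Hsum (j + 1) / ((j : ℝ) + 1)) ^ p with hS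
  have hS1 : 1 ≤ S := by
    have h0 : (Hsum (0 + 1) / ((0 : ℕ) : ℝ) + 1) = 1 := by simp [Hsum_one]
    have hle := Summable.le_tsum hc_sum 0 (fun j _ => Real.rpow_nonneg (hcnn j) p)
    simpa [Hsum_one] using hle
  have hT : (∑' j : ℕ, (M * (Hsum (j + 1) / ((j : ℝ) + 1))) ^ p) = M ^ p * S := by
    rw [tsum_congr hb_eq, tsum_mul_left]
  have hsum_bound : ∀ n : ℕ, ∑ k ∈ Finset.range n, |x k| ^ p ≤ M ^ p * S := by
    intro n
    refine (key n (Finset.range n) (Finset.card_range n)).trans ?_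
    rw [← hT]
    exact Summable.sum_le_tsum _ (fun j _ => Real.rpow_nonneg (mul_nonneg hM0 (hcnn j)) p) hb_sum
  have hxnn : ∀ k : ℕ, 0 ≤ |x k| ^ p := fun k => Real.rpow_nonneg (abs_nonneg _) p
  refine ⟨summable_of_sum_range_le hxnn hsum_bound, ?_⟩
  have htsum : (∑' k : ℕ, |x k| ^ p) ≤ M ^ p * S :=
    Real.tsum_le_of_sum_range_le hxnn hsum_bound
  calc (∑' k : ℕ, |x k| ^ p) ^ (1 / p)
      ≤ (M ^ p * S) ^ (1 / p) :=
        Real.rpow_le_rpow (tsum_nonneg hxnn) htsum (by positivity)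
    _ = (M ^ p) ^ (1 / p) * S ^ (1 / p) :=
        Real.mul_rpow (Real.rpow_nonneg hM0 p) (by linarith)
    _ = M * S ^ (1 / p) := by
        rw [← Real.rpow_mul hM0, mul_one_div_cancel hp0.ne', Real.rpow_one]
    _ = S ^ (1 / p) * M := mul_comm _ _

/-- for `1 < p < ∞`, every element of `G = d_*((1/n)_n)` is a `p`-summable
sequence, and the formal identity from `G` into `ℓ_p` is a bounded linear operator, i.e.
there is `C > 0` with `‖x‖_{ℓ_p} ≤ C ‖x‖_G` for all `x ∈ G`. -/
theorem G_subset_lp_and_formal_identity_bounded (p : ℝ) (hp : 1 < p) :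
    (∀ x ∈ dStarSet (fun n => 1 / (n + 1 : ℝ)), Summable (fun k => |x k| ^ p)) ∧
    ∃ C : ℝ, 0 < C ∧ ∀ x ∈ dStarSet (fun n => 1 / (n + 1 : ℝ)),
      (∑' k : ℕ, |x k| ^ p) ^ (1 / p) ≤ C * dStarNorm (fun n => 1 / (n + 1 : ℝ)) x := by
  have hp0 : (0 : ℝ) < p := by linarith
  have hHsum : ∀ n : ℕ, (∑ k ∈ Finset.range n, (1 : ℝ) / ((k : ℝ) + 1)) = Hsum n :=
    fun n => rfl
  have hmaster : ∀ x ∈ dStarSet (fun n => 1 / (n + 1 : ℝ)),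
      Summable (fun k => |x k| ^ p) ∧
      (∑' k : ℕ, |x k| ^ p) ^ (1 / p) ≤
        (∑' j : ℕ, (Hsum (j + 1) / ((j : ℝ) + 1)) ^ p) ^ (1 / p) *
          dStarNorm (fun n => 1 / (n + 1 : ℝ)) x := by
    intro x hx
    obtain ⟨hx1, hx2⟩ := hx
    exact master_bound hp hx1 hx2
  set S : ℝ := ∑' j : ℕ, (Hsum (j + 1) / ((j : ℝ) + 1)) ^ p with hS
  have hS1 : 1 ≤ S := by
    have hc_sum := summable_Hsum_rpow hp
    have hle := Summable.le_tsum hc_sum 0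
      (fun j _ => Real.rpow_nonneg (div_nonneg (Hsum_nonneg _) (by positivity)) p)
    simpa [Hsum_one] using hle
  have hC1 : 1 ≤ S ^ (1 / p) := by
    calc (1 : ℝ) = 1 ^ (1 / p) := (Real.one_rpow _).symm
      _ ≤ S ^ (1 / p) := Real.rpow_le_rpow zero_le_one hS1 (by positivity)
  exact ⟨fun x hx => (hmaster x hx).1,
    ⟨S ^ (1 / p), by linarith, fun x hx => (hmaster x hx).2⟩⟩
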